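/- If Hx and Hy are cosets of equal order in the cyclic quotient G/H, then there exists an integer a coprime to |G| such that the power map g ↦ g^a is a bijection of G mapping the coset Hx onto the coset Hy. -/
import Mathlib

/-- If `Hx` and `Hy` are cosets of equal order in the cyclic quotient `G/H`, then
there is an integer `a` coprime to `|G|` such that `g ↦ g^a` is a bijection of `G`
mapping the coset `Hx` onto the coset `Hy`. -/
theorem stmt3 {G : Type*} [Group G] [Finite G] (H : Subgroup G) [H.Normal]
    (hcyc : IsCyclic (G ⧸ H)) (x y : G)
    (hord : orderOf (QuotientGroup.mk x : G ⧸ H) = orderOf (QuotientGroup.mk y : G ⧸ H)) :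
    ∃ a : ℤ, IsCoprime a (Nat.card G : ℤ) ∧
      Function.Bijective (fun g : G => g ^ a) ∧
      (fun g : G => g ^ a) '' {g : G | (QuotientGroup.mk g : G ⧸ H) = QuotientGroup.mk x}
        = {g : G | (QuotientGroup.mk g : G ⧸ H) = QuotientGroup.mk y} := by
  classical
  set Q := G ⧸ H
  set xb : Q := QuotientGroup.mk x
  set yb : Q := QuotientGroup.mk y
  have : Fintype Q := Fintype.ofFinite Q
  set n := orderOf xb with hn
  have hn0 : 0 < n := orderOf_pos xb
  -- yb ∈ zpowers xb
  have hmem : yb ∈ Subgroup.zpowers xb := by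
    have hsub : ((Subgroup.zpowers xb : Subgroup Q) : Set Q).toFinset ⊆
        Finset.univ.filter (fun b : Q => b ^ n = 1) := by
      intro b hb
      simp only [Set.mem_toFinset, SetLike.mem_coe] at hb
      obtain ⟨k, rfl⟩ := Subgroup.mem_zpowers_iff.mp hb
      simp only [Finset.mem_filter, Finset.mem_univ, true_and]
      rw [← zpow_natCast, ← zpow_mul, mul_comm, zpow_mul, zpow_natCast, pow_orderOf_eq_one,
        one_zpow]
    have hcard : ((Subgroup.zpowers xb : Subgroup Q) : Set Q).toFinset.card = n := by
      rw [Set.toFinset_card]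
      exact Fintype.card_zpowers
    have hle := IsCyclic.card_pow_eq_one_le (α := Q) hn0
    have heq : ((Subgroup.zpowers xb : Subgroup Q) : Set Q).toFinset =
        Finset.univ.filter (fun b : Q => b ^ n = 1) :=
      Finset.eq_of_subset_of_card_le hsub (by rw [hcard]; exact hle)
    have hy : yb ∈ Finset.univ.filter (fun b : Q => b ^ n = 1) := by
      simp only [Finset.mem_filter, Finset.mem_univ, true_and]
      have := pow_orderOf_eq_one yb
      rwa [← hord] at this
    rw [← heq] at hy
    simpa using hy
  obtain ⟨m, hm'⟩ := (isOfFinOrder_of_finite xb).mem_powers_iff_mem_zpowers.mpr hmem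
  have hm : xb ^ m = yb := hm'
  -- coprimality of m and n
  have hcop : Nat.Coprime m n := by
    have h1 : orderOf (xb ^ m) = n / n.gcd m := by rw [orderOf_pow, hn]
    rw [hm, ← hord] at h1
    have hd : n.gcd m ∣ n := Nat.gcd_dvd_left n m
    have : n.gcd m = 1 := by
      have := Nat.div_eq_self.mp h1.symm
      rcases this with h | h
      · omega
      · exact h
    exact Nat.coprime_comm.mp this
  -- n ∣ Nat.card G
  have hdvdQ : n ∣ Nat.card Q := orderOf_dvd_natCard xb
  have hdvdG : Nat.card Q ∣ Nat.card G :=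
    ⟨Nat.card H, Subgroup.card_eq_card_quotient_mul_card_subgroup H⟩
  have hnd : n ∣ Nat.card G := hdvdQ.trans hdvdG
  have : NeZero (Nat.card G) := ⟨Nat.card_pos.ne'⟩
  obtain ⟨u, hu⟩ := ZMod.unitsMap_surjective hnd (ZMod.unitOfCoprime m hcop)
  set a : ℕ := (u : ZMod (Nat.card G)).val with ha
  have hacop : Nat.Coprime a (Nat.card G) := ZMod.val_coe_unit_coprime u
  -- a ≡ m [MOD n]
  have hmod : (a : ZMod n) = (m : ZMod n) := by
    have : ((ZMod.unitsMap hnd u : (ZMod n)ˣ) : ZMod n) = (m : ZMod n) := by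
      rw [hu, ZMod.coe_unitOfCoprime]
    rw [← this, ZMod.unitsMap_def]
    simp only [Units.coe_map, ZMod.castHom_apply, MonoidHom.coe_coe]
    rw [ha, ZMod.natCast_val]
  have hxa : xb ^ a = yb := by
    have hmm : a ≡ m [MOD n] := (ZMod.natCast_eq_natCast_iff a m n).mp hmod
    rw [← hm]
    exact pow_eq_pow_iff_modEq.mpr (hn ▸ hmm)
  refine ⟨(a : ℤ), ?_, ?_, ?_⟩
  · rw [Nat.isCoprime_iff_coprime]; exact hacop
  · have := (powCoprime (n := a) (Nat.coprime_comm.mp hacop)).bijective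
    convert this using 2 with g
    simp [powCoprime, zpow_natCast]
  · ext h
    simp only [Set.mem_image, Set.mem_setOf_eq]
    constructor
    · rintro ⟨g, hg, rfl⟩
      show (QuotientGroup.mk (g ^ (a : ℤ)) : Q) = yb
      rw [show ((QuotientGroup.mk (g ^ (a : ℤ))) : Q) = (QuotientGroup.mk g : Q) ^ (a : ℤ) by
        rfl, hg]
      rw [zpow_natCast, hxa]
    · intro hh
      obtain ⟨g, rfl⟩ := (powCoprime (G := G) (n := a)
        (Nat.coprime_comm.mp hacop)).surjective h
      refine ⟨g, ?_, by simp [powCoprime, zpow_natCast]⟩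
      have hQcop : (Nat.card Q).Coprime a :=
        Nat.Coprime.coprime_dvd_left hdvdG (Nat.coprime_comm.mp hacop)
      have hinj := (powCoprime (G := Q) hQcop).injective
      apply hinj
      show (QuotientGroup.mk g : Q) ^ a = xb ^ a
      rw [hxa]
      have : ((QuotientGroup.mk (g ^ a)) : Q) = (QuotientGroup.mk g : Q) ^ a := by
        simp
      rw [← this]
      simpa [powCoprime] using hh
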